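/- Let α be a circle of radius r and let S be a finite set of circles, each orthogonal to α, each of radius at least r, and pairwise non-nested (no circle of S is contained in the closed disk of another). Then |S| ≤ 6. -/

import Mathlib

open Complex Real

/-- Two circles in `ℂ` whose radii and center distance satisfy the triangle
inequalities have a common point. -/
lemma circles_meet_aux (a b : ℂ) (ρ R : ℝ) (hρ : 0 ≤ ρ) (hR : 0 ≤ R)
    (h1 : dist a b ≤ ρ + R) (h2 : R ≤ dist a b + ρ) (h3 : ρ ≤ dist a b + R) :
    ∃ x : ℂ, dist x a = ρ ∧ dist x b = R := by
  set D := dist a b with hD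
  rcases eq_or_lt_of_le (show (0:ℝ) ≤ D from dist_nonneg) with h0 | h0
  · have hD0 : D = 0 := h0.symm
    have hab : a = b := by
      rw [hD] at hD0; exact dist_eq_zero.mp hD0
    have hρR : ρ = R := by rw [hD0] at h2 h3; linarith
    refine ⟨a + (ρ : ℂ), ?_, ?_⟩
    · rw [Complex.dist_eq, add_sub_cancel_left, Complex.norm_real, Real.norm_eq_abs,
        _root_.abs_of_nonneg hρ]
    · rw [← hab, ← hρR, Complex.dist_eq, add_sub_cancel_left, Complex.norm_real, Real.norm_eq_abs,
        _root_.abs_of_nonneg hρ]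
  · have hD0 : D ≠ 0 := ne_of_gt h0
    set t : ℝ := (D ^ 2 + ρ ^ 2 - R ^ 2) / (2 * D) with ht_def
    have ht : 2 * D * t = D ^ 2 + ρ ^ 2 - R ^ 2 := by
      rw [ht_def]
      field_simp
    have ht2 : (2 * D * t) ^ 2 = (D ^ 2 + ρ ^ 2 - R ^ 2) ^ 2 := by rw [ht]
    have f1 : (0:ℝ) ≤ D + ρ - R := by linarith
    have f2 : (0:ℝ) ≤ D + ρ + R := by linarith
    have f3 : (0:ℝ) ≤ ρ + R - D := by linarith
    have f4 : (0:ℝ) ≤ D + R - ρ := by linarith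
    have key2 : (D ^ 2 + ρ ^ 2 - R ^ 2) ^ 2 ≤ 4 * D ^ 2 * ρ ^ 2 := by
      nlinarith [mul_nonneg (mul_nonneg (mul_nonneg f1 f2) f3) f4]
    have htρ : t ^ 2 ≤ ρ ^ 2 := by
      nlinarith [mul_pos h0 h0, ht2, key2]
    set h : ℝ := Real.sqrt (ρ ^ 2 - t ^ 2) with hh_def
    have hh : h ^ 2 = ρ ^ 2 - t ^ 2 := Real.sq_sqrt (by linarith)
    have hba : ‖(b - a)‖ = D := by
      rw [hD, dist_comm, Complex.dist_eq]
    set u : ℂ := (b - a) / (D : ℂ) with hu_def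
    have hDc : (D : ℂ) ≠ 0 := Complex.ofReal_ne_zero.mpr hD0
    have hu : ‖u‖ = 1 := by
      rw [hu_def, norm_div, hba, Complex.norm_real, Real.norm_eq_abs, _root_.abs_of_pos h0,
        div_self hD0]
    have hDu : (D : ℂ) * u = b - a := by
      rw [hu_def]
      field_simp
    refine ⟨a + ((t : ℂ) + (h : ℂ) * Complex.I) * u, ?_, ?_⟩
    · rw [Complex.dist_eq]
      have e1 : a + ((t : ℂ) + (h : ℂ) * Complex.I) * u - a
          = ((t : ℂ) + (h : ℂ) * Complex.I) * u := by ring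
      rw [e1, norm_mul, hu, mul_one, Complex.norm_add_mul_I]
      rw [show t ^ 2 + h ^ 2 = ρ ^ 2 by linarith]
      exact Real.sqrt_sq hρ
    · rw [Complex.dist_eq]
      have e1 : a + ((t : ℂ) + (h : ℂ) * Complex.I) * u - b
          = (((t - D : ℝ) : ℂ) + (h : ℂ) * Complex.I) * u := by
        push_cast
        rw [show ((t:ℂ) - D + (h:ℂ) * Complex.I) * u
            = ((t:ℂ) + (h:ℂ) * Complex.I) * u - (D:ℂ) * u by ring, hDu]
        ring
      rw [e1, norm_mul, hu, mul_one, Complex.norm_add_mul_I]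
      rw [show (t - D) ^ 2 + h ^ 2 = R ^ 2 by nlinarith [ht, hh]]
      exact Real.sqrt_sq hR

/-- In an arrangement of orthogonal circles (any two circles are disjoint or
orthogonal), a set `S` of circles, each orthogonal to a circle α of radius `r`,
each of radius at least `r`, and pairwise non-nested, has at most 6 elements. -/
theorem at_most_six_neighbours
    (cα : EuclideanSpace ℝ (Fin 2)) (r : ℝ) (hr : 0 < r)
    (S : Finset (EuclideanSpace ℝ (Fin 2) × ℝ))
    (hpos : ∀ p ∈ S, r ≤ p.2)
    (horth : ∀ p ∈ S, r ^ 2 + p.2 ^ 2 = dist cα p.1 ^ 2)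
    (harr : ∀ p ∈ S, ∀ q ∈ S, p ≠ q →
      Disjoint (Metric.sphere p.1 p.2) (Metric.sphere q.1 q.2) ∨
      p.2 ^ 2 + q.2 ^ 2 = dist p.1 q.1 ^ 2)
    (hnonnested : ∀ p ∈ S, ∀ q ∈ S, p ≠ q →
      ¬ Metric.closedBall p.1 p.2 ⊆ Metric.closedBall q.1 q.2) :
    S.card ≤ 6 := by
  by_contra hcard
  push_neg at hcard
  obtain ⟨e⟩ : Nonempty (ℂ ≃ₗᵢ[ℝ] EuclideanSpace ℝ (Fin 2)) :=
    ⟨Complex.isometryOfOrthonormal (EuclideanSpace.basisFun (Fin 2) ℝ)⟩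
  set z : (EuclideanSpace ℝ (Fin 2) × ℝ) → ℂ :=
    fun p => e.symm p.1 - e.symm cα with hz
  have habs : ∀ p ∈ S, ‖(z p)‖ ^ 2 = r ^ 2 + p.2 ^ 2 := by
    intro p hp
    have h1 : ‖(z p)‖ = dist cα p.1 := by
      rw [hz]
      simp only
      rw [← Complex.dist_eq, dist_comm, e.symm.dist_map]
    rw [h1, ← horth p hp]
  have hzpos : ∀ p ∈ S, 0 < ‖(z p)‖ := by
    intro p hp
    rcases (norm_nonneg (z p)).lt_or_eq with h | h
    · exact h
    · exfalso
      have h2 := habs p hp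
      rw [← h] at h2
      have hrp := hpos p hp
      nlinarith
  have hdistpq : ∀ p q : EuclideanSpace ℝ (Fin 2) × ℝ,
      dist p.1 q.1 = ‖(z p - z q)‖ := by
    intro p q
    rw [hz]
    simp only
    rw [show e.symm p.1 - e.symm cα - (e.symm q.1 - e.symm cα)
        = e.symm p.1 - e.symm q.1 by ring, ← Complex.dist_eq, e.symm.dist_map]
  -- Key geometric bound
  have key : ∀ p ∈ S, ∀ q ∈ S, p ≠ q →
      (z p * (starRingEnd ℂ) (z q)).re
        ≤ ‖(z p)‖ * ‖(z q)‖ / 2 := by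
    intro p hp q hq hpq
    have hdp0 : 0 < ‖(z p)‖ := hzpos p hp
    have hdq0 : 0 < ‖(z q)‖ := hzpos q hq
    have hrp := hpos p hp
    have hrq := hpos q hq
    have hDA : dist p.1 q.1 ^ 2 = ‖(z p)‖ ^ 2 + ‖(z q)‖ ^ 2
        - 2 * (z p * (starRingEnd ℂ) (z q)).re := by
      rw [hdistpq p q]
      simp only [Complex.sq_norm, Complex.normSq_apply, Complex.mul_re,
        Complex.conj_re, Complex.conj_im, Complex.sub_re, Complex.sub_im]
      ring
    have hdp2 := habs p hp
    have hdq2 := habs q hq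
    rcases harr p hp q hq hpq with hdisj | horth2
    · have hDge : p.2 + q.2 ≤ dist p.1 q.1 := by
        by_contra hlt
        push_neg at hlt
        have h2 : ¬ (dist p.1 q.1 + p.2 ≤ q.2) := by
          intro h
          exact hnonnested p hp q hq hpq
            (Metric.closedBall_subset_closedBall' (by linarith))
        have h3 : ¬ (dist p.1 q.1 + q.2 ≤ p.2) := by
          intro h
          exact hnonnested q hq p hp (Ne.symm hpq)
            (Metric.closedBall_subset_closedBall'
              (by rw [dist_comm]; linarith))
        push_neg at h2 h3
        have hDfq : dist (e.symm p.1) (e.symm q.1) = dist p.1 q.1 :=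
          e.symm.dist_map p.1 q.1
        obtain ⟨x, hx1, hx2⟩ := circles_meet_aux (e.symm p.1) (e.symm q.1) p.2 q.2
          (le_trans hr.le hrp) (le_trans hr.le hrq)
          (by rw [hDfq]; linarith) (by rw [hDfq]; linarith)
          (by rw [hDfq]; linarith)
        have hm1 : e x ∈ Metric.sphere p.1 p.2 := by
          rw [Metric.mem_sphere]
          conv_lhs => rw [show p.1 = e (e.symm p.1) from (e.apply_symm_apply p.1).symm]
          rw [e.dist_map]
          exact hx1
        have hm2 : e x ∈ Metric.sphere q.1 q.2 := by
          rw [Metric.mem_sphere]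
          conv_lhs => rw [show q.1 = e (e.symm q.1) from (e.apply_symm_apply q.1).symm]
          rw [e.dist_map]
          exact hx2
        exact Set.disjoint_left.mp hdisj hm1 hm2
      have hD2ge : (p.2 + q.2) ^ 2 ≤ dist p.1 q.1 ^ 2 := by nlinarith
      have hρR : r ^ 2 ≤ p.2 * q.2 := by nlinarith
      have hAle : (z p * (starRingEnd ℂ) (z q)).re ≤ 0 := by nlinarith
      nlinarith [mul_pos hdp0 hdq0]
    · have hAr : (z p * (starRingEnd ℂ) (z q)).re = r ^ 2 := by
        have hD2 : dist p.1 q.1 ^ 2 = p.2 ^ 2 + q.2 ^ 2 := horth2.symm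
        linarith
      have h1 : 2 * r ^ 2 ≤ ‖(z p)‖ ^ 2 := by nlinarith
      have h2 : 2 * r ^ 2 ≤ ‖(z q)‖ ^ 2 := by nlinarith
      have hprod : 2 * r ^ 2 ≤ ‖(z p)‖ * ‖(z q)‖ := by
        nlinarith [mul_nonneg hdp0.le hdq0.le,
          mul_nonneg (sub_nonneg.mpr h1) (sub_nonneg.mpr h2),
          mul_pos hr hr]
      linarith
  -- angle function in [-π, π)
  set g : (EuclideanSpace ℝ (Fin 2) × ℝ) → ℝ :=
    fun p => if Complex.arg (z p) = π then -π else Complex.arg (z p) with hg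
  have hgmem : ∀ p, -π ≤ g p ∧ g p < π := by
    intro p
    rw [hg]
    by_cases h : Complex.arg (z p) = π
    · simp only [h, if_pos]
      exact ⟨le_refl _, neg_lt_self Real.pi_pos⟩
    · simp only [h, if_false]
      exact ⟨(Complex.neg_pi_lt_arg _).le, lt_of_le_of_ne (Complex.arg_le_pi _) h⟩
  have hre : ∀ p, (z p).re = ‖(z p)‖ * Real.cos (g p) := by
    intro p
    simp only [hg]
    by_cases h : Complex.arg (z p) = π
    · rw [if_pos h, Real.cos_neg, ← h, Complex.norm_mul_cos_arg]
    · rw [if_neg h, Complex.norm_mul_cos_arg]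
  have him : ∀ p, (z p).im = ‖(z p)‖ * Real.sin (g p) := by
    intro p
    simp only [hg]
    by_cases h : Complex.arg (z p) = π
    · rw [if_pos h, Real.sin_neg, Real.sin_pi, neg_zero, mul_zero,
        ← Complex.norm_mul_sin_arg, h, Real.sin_pi, mul_zero]
    · rw [if_neg h, Complex.norm_mul_sin_arg]
  have hAre : ∀ p q : EuclideanSpace ℝ (Fin 2) × ℝ,
      (z p * (starRingEnd ℂ) (z q)).re
        = ‖(z p)‖ * ‖(z q)‖ * Real.cos (g p - g q) := by
    intro p q
    rw [Real.cos_sub]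
    simp only [Complex.mul_re, Complex.conj_re, Complex.conj_im]
    rw [hre p, hre q, him p, him q]
    ring
  -- pigeonhole over 6 buckets
  set bucket : (EuclideanSpace ℝ (Fin 2) × ℝ) → ℤ :=
    fun p => ⌊(g p + π) * 3 / π⌋ with hbucket
  have hmaps : ∀ p ∈ S, bucket p ∈ Finset.Icc (0 : ℤ) 5 := by
    intro p _
    rw [Finset.mem_Icc]
    obtain ⟨hl, hu⟩ := hgmem p
    constructor
    · simp only [hbucket]
      apply Int.le_floor.mpr
      push_cast
      apply div_nonneg _ Real.pi_pos.le
      nlinarith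
    · simp only [hbucket]
      have h6 : (⌊(g p + π) * 3 / π⌋ : ℤ) < 6 := by
        apply Int.floor_lt.mpr
        push_cast
        rw [div_lt_iff₀ Real.pi_pos]
        nlinarith
      omega
  have hIcc : (Finset.Icc (0 : ℤ) 5).card = 6 := by
    rw [Int.card_Icc]
    rfl
  obtain ⟨p, hp, q, hq, hpq, hbeq⟩ :=
    Finset.exists_ne_map_eq_of_card_lt_of_maps_to (by rw [hIcc]; exact hcard) hmaps
  have hbeq' : ⌊(g p + π) * 3 / π⌋ = ⌊(g q + π) * 3 / π⌋ := hbeq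
  have habslt : |(g p + π) * 3 / π - (g q + π) * 3 / π| < 1 :=
    Int.abs_sub_lt_one_of_floor_eq_floor hbeq'
  have hangle : |g p - g q| < π / 3 := by
    have heq : (g p + π) * 3 / π - (g q + π) * 3 / π = (g p - g q) * 3 / π := by
      ring
    rw [heq, abs_div, _root_.abs_of_pos Real.pi_pos, div_lt_one Real.pi_pos,
      abs_mul, show |(3:ℝ)| = 3 by norm_num] at habslt
    linarith
  have hcosgt : 1 / 2 < Real.cos (g p - g q) := by
    have h1 : Real.cos (π / 3) < Real.cos |g p - g q| :=
      Real.cos_lt_cos_of_nonneg_of_le_pi (abs_nonneg _)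
        (by linarith [Real.pi_pos]) hangle
    rw [Real.cos_abs] at h1
    rw [← Real.cos_pi_div_three]
    exact h1
  have hk := key p hp q hq hpq
  rw [hAre p q] at hk
  have hdp0 : 0 < ‖(z p)‖ := hzpos p hp
  have hdq0 : 0 < ‖(z q)‖ := hzpos q hq
  nlinarith [mul_pos hdp0 hdq0]
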